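/- Let f : 𝔻 → Ω be a conformal map with f(0) = 0. There exists a unique Möbius transformation M (element of PSL₂(ℂ) acting on ℂ̂) with the same 2-jet as f at 0, namely M(ζ) = αζ/(βζ + 1/α) where α² = f'(0) and 2αβ = −f''(0)/f'(0). Moreover, the extension of M to an isometry of hyperbolic 3-space ℍ³ (in the quaternionic upper half-space model) satisfies M(𝔧) = (αβ̄ + 𝔧)/(|β|² + 1/|α|²), where 𝔧 = (0,0,1). -/

import Mathlib

set_option maxHeartbeats 1000000


open Complex Metric Set Quaternion

/-- The embedding `ℂ ↪ ℍ` of the complex numbers into the quaternions. -/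
def QC (z : ℂ) : Quaternion ℝ := ⟨z.re, z.im, 0, 0⟩

/-- The quaternion `𝔧`, i.e. the point `(0,0,1)` of the upper half-space model of `ℍ³`. -/
def quatJ : Quaternion ℝ := ⟨0, 0, 1, 0⟩

lemma mob_hasDerivAt (p q s t ζ : ℂ) (h : s * ζ + t ≠ 0) :
    HasDerivAt (fun z => (p * z + q) / (s * z + t)) ((p * t - q * s) / (s * ζ + t) ^ 2) ζ := by
  have h1 : HasDerivAt (fun z : ℂ => p * z + q) p ζ := by
    simpa using ((hasDerivAt_id ζ).const_mul p).add_const q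
  have h2 : HasDerivAt (fun z : ℂ => s * z + t) s ζ := by
    simpa using ((hasDerivAt_id ζ).const_mul s).add_const t
  have := h1.div h2 h
  refine this.congr_deriv ?_
  ring

lemma mob_deriv_eventuallyEq (p q s t ζ : ℂ) (h : s * ζ + t ≠ 0) :
    deriv (fun z => (p * z + q) / (s * z + t)) =ᶠ[nhds ζ]
      (fun z => (p * t - q * s) / (s * z + t) ^ 2) := by
  have hopen : IsOpen {z : ℂ | s * z + t ≠ 0} :=
    isOpen_ne.preimage (by continuity)
  filter_upwards [hopen.mem_nhds h] with z hz
  exact (mob_hasDerivAt p q s t z hz).deriv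

lemma mob_deriv2 (p q s t ζ : ℂ) (h : s * ζ + t ≠ 0) :
    deriv (deriv (fun z => (p * z + q) / (s * z + t))) ζ =
      -2 * s * (p * t - q * s) / (s * ζ + t) ^ 3 := by
  rw [Filter.EventuallyEq.deriv_eq (mob_deriv_eventuallyEq p q s t ζ h)]
  have h2 : HasDerivAt (fun z : ℂ => (s * z + t) ^ 2) (2 * (s * ζ + t) * s) ζ := by
    have : HasDerivAt (fun z : ℂ => s * z + t) s ζ := by
      simpa using ((hasDerivAt_id ζ).const_mul s).add_const t
    simpa [pow_succ, mul_comm] using this.fun_pow 2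
  have h3 : HasDerivAt (fun z : ℂ => (p * t - q * s) / (s * z + t) ^ 2)
      (-(2 * (s * ζ + t) * s) / ((s * ζ + t) ^ 2) ^ 2 * (p * t - q * s)) ζ := by
    have := ((h2.inv (pow_ne_zero 2 h)).const_mul (p * t - q * s))
    simpa [div_eq_mul_inv, mul_comm] using this
  rw [h3.deriv]
  field_simp

lemma mob_deriv_zero (a b c : ℂ) (hb : b ≠ 0) (hc : c ≠ 0) :
    deriv (fun z : ℂ => (a * z + b) / (c * z + 0)) 0 = 0 := by
  apply deriv_zero_of_not_differentiableAt
  intro hdiff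
  have hcont : ContinuousAt (fun z : ℂ => (a * z + b) / (c * z + 0)) 0 := hdiff.continuousAt
  have h1 : Filter.Tendsto (fun z : ℂ => z * ((a * z + b) / (c * z + 0))) (nhds 0)
      (nhds 0) := by
    have := (continuousAt_id.fun_mul hcont).tendsto
    simpa using this
  have h2 : Filter.Tendsto (fun z : ℂ => z * ((a * z + b) / (c * z + 0)))
      (nhdsWithin 0 {(0:ℂ)}ᶜ) (nhds (b / c)) := by
    have heq : ∀ z ∈ ({(0:ℂ)}ᶜ : Set ℂ), z * ((a * z + b) / (c * z + 0)) = (a * z + b) / c := by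
      intro z hz
      have hz0 : z ≠ 0 := hz
      field_simp
      ring
    have h3 : Filter.Tendsto (fun z : ℂ => (a * z + b) / c) (nhdsWithin 0 {(0:ℂ)}ᶜ)
        (nhds (b / c)) := by
      have : ContinuousAt (fun z : ℂ => (a * z + b) / c) 0 := by fun_prop
      simpa using this.continuousWithinAt.tendsto
    exact Filter.Tendsto.congr' (by filter_upwards [self_mem_nhdsWithin] with z hz
      using (heq z hz).symm) h3
  have h1' := h1.mono_left (nhdsWithin_le_nhds : nhdsWithin (0:ℂ) {(0:ℂ)}ᶜ ≤ nhds 0)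
  have : b / c = 0 := tendsto_nhds_unique h2 h1'
  exact hb (by simpa [div_eq_zero_iff, hc] using this)

/-- The osculating Möbius transformation: for a conformal `f` with `f 0 = 0` there is a
(unique) Möbius transformation `M(ζ) = αζ/(βζ + 1/α)`, `α² = f'(0)`, `2αβ = -f''(0)/f'(0)`,
with the same 2-jet as `f` at `0`; its isometric extension to `ℍ³` (via quaternions)
satisfies `M(𝔧) = (αβ̄ + 𝔧)/(|β|² + 1/|α|²)`. -/
theorem osculating_mobius
    (f : ℂ → ℂ) (r : ℝ) (hr : 0 < r)
    (hf : DifferentiableOn ℂ f (ball (0:ℂ) r))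
    (hinj : InjOn f (ball (0:ℂ) r))
    (hf0 : f 0 = 0) (hf'0 : deriv f 0 ≠ 0)
    (α β : ℂ) (hα : α ^ 2 = deriv f 0)
    (hβ : 2 * α * β = -(deriv (deriv f) 0 / deriv f 0))
    (M : ℂ → ℂ) (hM : M = fun ζ => α * ζ / (β * ζ + 1 / α)) :
    (M 0 = f 0 ∧ deriv M 0 = deriv f 0 ∧ deriv (deriv M) 0 = deriv (deriv f) 0) ∧
    (∀ a b c d : ℂ, a * d - b * c = 1 →
      ∀ N : ℂ → ℂ, N = (fun ζ => (a * ζ + b) / (c * ζ + d)) →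
      N 0 = f 0 → deriv N 0 = deriv f 0 → deriv (deriv N) 0 = deriv (deriv f) 0 →
      ∀ ζ : ℂ, c * ζ + d ≠ 0 → β * ζ + 1 / α ≠ 0 → N ζ = M ζ) ∧
    (QC α * quatJ) * (QC β * quatJ + QC (1 / α))⁻¹ =
      ((‖β‖ ^ 2 + 1 / ‖α‖ ^ 2)⁻¹ : ℝ) • (QC (α * (starRingEnd ℂ) β) + quatJ) := by
  have ha : α ≠ 0 := by
    intro h; apply hf'0; rw [← hα, h]; ring
  have hM' : M = fun z => (α * z + 0) / (β * z + 1 / α) := by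
    rw [hM]; funext z; rw [add_zero]
  have h0 : β * (0:ℂ) + 1 / α ≠ 0 := by simpa using one_div_ne_zero ha
  have hf2 : deriv (deriv f) 0 = -(2 * α * β) * α ^ 2 := by
    have h := hβ
    rw [← hα] at h
    field_simp at h
    linear_combination h
  refine ⟨?_, ?_, ?_⟩
  · refine ⟨by rw [hM, hf0]; simp, ?_, ?_⟩
    · rw [hM', (mob_hasDerivAt α 0 β (1/α) 0 h0).deriv, ← hα]
      field_simp
      try ring
    · rw [hM', mob_deriv2 α 0 β (1/α) 0 h0, hf2]
      field_simp
      try ring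
  · intro a b c d hdet N hN hN0 hN1 hN2 ζ hcd hβζ
    by_cases hd : d = 0
    · exfalso
      subst hd
      apply hf'0
      rw [← hN1, hN]
      have hbc : b ≠ 0 ∧ c ≠ 0 := by
        constructor <;> · intro h; rw [h] at hdet; simp at hdet
      exact mob_deriv_zero a b c hbc.1 hbc.2
    · have hb : b = 0 := by
        rw [hN, hf0] at hN0
        simp only [mul_zero, zero_add] at hN0
        rcases div_eq_zero_iff.mp hN0 with h | h
        · exact h
        · exact absurd h hd
      subst hb
      have had : a * d = 1 := by linear_combination hdet
      have ha0 : a ≠ 0 := fun h => by rw [h] at had; simp at had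
      have hdi : d = a⁻¹ := by field_simp; linear_combination had
      have hden0 : c * (0:ℂ) + d ≠ 0 := by simpa using hd
      have hda : deriv N 0 = a ^ 2 := by
        rw [hN, (mob_hasDerivAt a 0 c d 0 hden0).deriv, hdi]
        field_simp
        try ring
      have ha2 : a ^ 2 = α ^ 2 := by rw [← hda, hN1, ← hα]
      have hdd : deriv (deriv N) 0 = -2 * c * a ^ 3 := by
        rw [hN, mob_deriv2 a 0 c d 0 hden0, hdi]
        field_simp
        try ring
      have hc3 : c * a ^ 3 = β * α ^ 3 := by
        have h' := hdd.symm.trans (hN2.trans hf2)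
        linear_combination (-1/2 : ℂ) * h'
      have hfact : (a - α) * (a + α) = 0 := by linear_combination ha2
      rcases mul_eq_zero.mp hfact with h' | h'
      · have haα : a = α := by linear_combination h'
        have hc' := hc3
        rw [haα] at hc'
        have hcβ : c = β := mul_right_cancel₀ (pow_ne_zero 3 ha) hc'
        rw [hN, hM']
        show (a * ζ + 0) / (c * ζ + d) = (α * ζ + 0) / (β * ζ + 1 / α)
        rw [haα, hcβ, hdi, haα, inv_eq_one_div]
      · have haα : a = -α := by linear_combination h'
        have hc' := hc3
        rw [haα] at hc'
        have hcβ : c = -β := mul_right_cancel₀ (pow_ne_zero 3 ha) (by linear_combination -hc')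
        rw [hN, hM']
        show (a * ζ + 0) / (c * ζ + d) = (α * ζ + 0) / (β * ζ + 1 / α)
        rw [haα, hcβ, hdi, haα, inv_neg, inv_eq_one_div,
          show -α * ζ + 0 = -(α * ζ + 0) by ring,
          show -β * ζ + -(1 / α) = -(β * ζ + 1 / α) by ring, neg_div_neg_eq]
  · have hxy : α.re ^ 2 + α.im ^ 2 ≠ 0 := by
      simpa [Complex.normSq_apply, sq] using (Complex.normSq_pos.mpr ha).ne'
    have hD : QC β * quatJ + QC (1 / α) =
        (⟨(1/α).re, (1/α).im, β.re, β.im⟩ : Quaternion ℝ) := by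
      ext <;> simp [Quaternion.re_mul, Quaternion.imI_mul, Quaternion.imJ_mul,
        Quaternion.imK_mul] <;> simp [QC, quatJ]
    have hDinv : (QC β * quatJ + QC (1 / α))⁻¹ =
        (((1/α).re ^ 2 + (1/α).im ^ 2 + β.re ^ 2 + β.im ^ 2)⁻¹ : ℝ) •
          (⟨(1/α).re, -(1/α).im, -β.re, -β.im⟩ : Quaternion ℝ) := by
      rw [Quaternion.inv_def, Quaternion.normSq_def', hD]
      congr 1
      show (⟨_ + 0 * _, _, _, _⟩ : Quaternion ℝ) = _
      simp
    have hre : (1/α).re = α.re / (α.re ^ 2 + α.im ^ 2) := by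
      rw [one_div, Complex.inv_re, Complex.normSq_apply]; ring_nf
    have him : (1/α).im = -α.im / (α.re ^ 2 + α.im ^ 2) := by
      rw [one_div, Complex.inv_im, Complex.normSq_apply]; ring_nf
    have hn : (‖β‖ ^ 2 + 1 / ‖α‖ ^ 2 : ℝ) = β.re ^ 2 + β.im ^ 2 + 1 / (α.re ^ 2 + α.im ^ 2) := by
      rw [Complex.sq_norm, Complex.sq_norm,
        Complex.normSq_apply, Complex.normSq_apply]
      ring_nf
    rw [hDinv, hn, hre, him]
    change QC α * quatJ * ((_ : ℝ) • (_ : Quaternion ℝ)) = _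
    set Y : Quaternion ℝ := (⟨α.re / (α.re ^ 2 + α.im ^ 2), -(-α.im / (α.re ^ 2 + α.im ^ 2)), -β.re,
      -β.im⟩ : Quaternion ℝ) with hY
    ext <;>
      simp only [Quaternion.re_mul, Quaternion.imI_mul, Quaternion.imJ_mul,
        Quaternion.imK_mul, Quaternion.re_smul, Quaternion.imI_smul, Quaternion.imJ_smul,
        Quaternion.imK_smul, Quaternion.re_add, Quaternion.imI_add, Quaternion.imJ_add,
        Quaternion.imK_add] <;>
      simp only [hY, QC, quatJ, Complex.mul_re, Complex.mul_im, Complex.conj_re, Complex.conj_im,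
        smul_eq_mul] <;>
      field_simp <;>
      ring
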